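/- Let f ∈ C²([0,1]^d) and define the tensor product Bernstein operator B_{n,…,n} f(x_1,…,x_d) := Σ_{i_1=0}^{n} ⋯ Σ_{i_d=0}^{n} f(i_1/n,…,i_d/n) B_{n,i_1}(x_1) ⋯ B_{n,i_d}(x_d), where B_{n,i}(x) = C(n,i) x^i (1−x)^{n−i}. Then ‖f − B_{n,…,n} f‖_∞ ≤ (d/(8n)) |f|_{2,∞}, where |f|_{2,∞} = max_{i_1+⋯+i_d = 2} ‖D_{x_1}^{i_1} ⋯ D_{x_d}^{i_d} f‖_∞. -/

import Mathlib

open Finset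

noncomputable def Bw (n a : ℕ) (t : ℝ) : ℝ := (n.choose a : ℝ) * t ^ a * (1 - t) ^ (n - a)

lemma Bw_nonneg {n a : ℕ} {t : ℝ} (ht : t ∈ Set.Icc (0:ℝ) 1) : 0 ≤ Bw n a t := by
  obtain ⟨h0, h1⟩ := ht
  have h2 : (0:ℝ) ≤ 1 - t := by linarith
  unfold Bw; positivity

lemma Bw_eq_bernstein {n a : ℕ} (x : unitInterval) : Bw n a (x : ℝ) = bernstein n a x := by
  rw [bernstein_apply]; rfl

lemma sum_Bw (n : ℕ) {t : ℝ} (ht : t ∈ Set.Icc (0:ℝ) 1) :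
    ∑ a : Fin (n+1), Bw n (a : ℕ) t = 1 := by
  have h := bernstein.probability n ⟨t, ht⟩
  calc ∑ a : Fin (n+1), Bw n (a : ℕ) t
      = ∑ a : Fin (n+1), bernstein n (a : ℕ) (⟨t, ht⟩ : unitInterval) := by
        refine Finset.sum_congr rfl fun a _ => ?_
        exact Bw_eq_bernstein (⟨t, ht⟩ : unitInterval)
    _ = 1 := h

lemma moment1_Bw (n : ℕ) (t : ℝ) :
    ∑ a : Fin (n+1), (a : ℝ) * Bw n (a : ℕ) t = n * t := by
  have h := bernsteinPolynomial.sum_smul ℝ n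
  apply_fun fun p => Polynomial.aeval t p at h
  simp only [map_sum, Finset.sum_range, nsmul_eq_mul, map_mul, map_natCast,
    Polynomial.coe_aeval_eq_eval] at h
  simp only [Polynomial.eval_X] at h
  rw [← h]
  refine Finset.sum_congr rfl fun a _ => ?_
  congr 1
  simp [bernsteinPolynomial, Bw]

lemma var_Bw {n : ℕ} (hn : 0 < n) {t : ℝ} (ht : t ∈ Set.Icc (0:ℝ) 1) :
    ∑ a : Fin (n+1), ((a:ℝ)/n - t)^2 * Bw n (a : ℕ) t = t * (1-t)/n := by
  have h := bernstein.variance (Nat.pos_iff_ne_zero.mp hn) (⟨t, ht⟩ : unitInterval)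
  rw [← h]
  refine Finset.sum_congr rfl fun a _ => ?_
  rw [← Bw_eq_bernstein (⟨t, ht⟩ : unitInterval)]
  have : ((⟨t, ht⟩ : unitInterval) : ℝ) - (bernstein.z a : ℝ) = t - (a:ℝ)/n := by
    simp [bernstein.z]
  rw [this]
  ring


-- second-order Taylor bound via Rolle
lemma taylor2 (g g' g'' : ℝ → ℝ) (hg : ∀ u, HasDerivAt g (g' u) u)
    (hg' : ∀ u, HasDerivAt g' (g'' u) u) (M : ℝ)
    (hM : ∀ u ∈ Set.Icc (0:ℝ) 1, |g'' u| ≤ M)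
    {t s : ℝ} (ht : t ∈ Set.Icc (0:ℝ) 1) (hs : s ∈ Set.Icc (0:ℝ) 1) :
    |g s - g t - g' t * (s - t)| ≤ M / 2 * (s - t)^2 := by
  rcases eq_or_ne s t with rfl | hst
  · simp
  · have hst2 : (s - t)^2 ≠ 0 := pow_ne_zero _ (sub_ne_zero.mpr hst)
    set C : ℝ := (g s - g t - g' t * (s - t)) / (s - t)^2 with hC
    have key : g s - g t - g' t * (s - t) = C * (s - t)^2 := by
      rw [hC]; field_simp
    -- φ u := g s - g u - g' u * (s - u) - C * (s - u)^2
    set φ : ℝ → ℝ := fun u => g s - g u - g' u * (s - u) - C * (s - u)^2 with hφ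
    have hφderiv : ∀ u, HasDerivAt φ ((2 * C - g'' u) * (s - u)) u := by
      intro u
      have hsub : HasDerivAt (fun u : ℝ => s - u) (0 - 1) u :=
        (hasDerivAt_const u s).sub (hasDerivAt_id u)
      have h1 : HasDerivAt (fun u => g' u * (s - u)) (g'' u * (s - u) + g' u * (0 - 1)) u :=
        (hg' u).mul hsub
      have h2 : HasDerivAt (fun u => C * (s - u)^2) (C * ((2:ℕ) * (s - u) ^ (2-1) * (0 - 1))) u :=
        (hsub.pow 2).const_mul C
      have h3 : HasDerivAt φ (0 - g' u - (g'' u * (s - u) + g' u * (0 - 1)) - C * ((2:ℕ) * (s - u) ^ (2-1) * (0 - 1))) u :=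
        (((hasDerivAt_const u (g s)).sub (hg u)).sub h1).sub h2
      convert h3 using 1
      ring
    have hφs : φ s = 0 := by simp [hφ]
    have hφt : φ t = 0 := by simp only [hφ]; rw [← key]; ring
    -- Rolle on [min, max]
    have hmem : ∀ u, u ∈ Set.Icc (min s t) (max s t) → u ∈ Set.Icc (0:ℝ) 1 := by
      intro u hu
      constructor
      · exact le_trans (le_min hs.1 ht.1) hu.1
      · exact le_trans hu.2 (max_le hs.2 ht.2)
    have hlt : min s t < max s t := by
      rcases lt_or_gt_of_ne hst with h | h
      · rw [min_eq_left h.le, max_eq_right h.le]; exact h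
      · rw [min_eq_right h.le, max_eq_left h.le]; exact h
    have hends : φ (min s t) = φ (max s t) := by
      rcases le_total s t with h | h
      · rw [min_eq_left h, max_eq_right h, hφs, hφt]
      · rw [min_eq_right h, max_eq_left h, hφt, hφs]
    obtain ⟨ξ, hξ, hξ0⟩ := exists_hasDerivAt_eq_zero hlt
      (fun u _ => (hφderiv u).continuousAt.continuousWithinAt) hends
      (fun u _ => hφderiv u)
    have hξne : s - ξ ≠ 0 := by
      have h1 := hξ.1; have h2 := hξ.2
      rcases le_total s t with h | h
      · rw [min_eq_left h] at h1; intro hc; nlinarith [sub_eq_zero.mp hc]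
      · rw [max_eq_left h] at h2; intro hc; nlinarith [sub_eq_zero.mp hc]
    have h2C : 2 * C = g'' ξ := by
      rcases mul_eq_zero.mp hξ0 with h | h
      · linarith [sub_eq_zero.mp h]  -- 2C - g'' ξ = 0
      · exact absurd h hξne
    have hξIcc : ξ ∈ Set.Icc (0:ℝ) 1 := hmem ξ (Set.Ioo_subset_Icc_self hξ)
    have hCle : |C| ≤ M / 2 := by
      have := hM ξ hξIcc
      rw [← h2C] at this
      rw [abs_mul, abs_two] at this
      linarith [abs_nonneg C]
    rw [key, abs_mul, abs_pow, sq_abs]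
    exact mul_le_mul_of_nonneg_right hCle (sq_nonneg _)

-- shift lemma
lemma hasDerivAt_of_shift {F : ℝ → ℝ} {c u : ℝ}
    (h : HasDerivAt (fun t => F (u + t)) c 0) : HasDerivAt F c u := by
  have hs : HasDerivAt (fun s : ℝ => s - u) 1 u := by
    simpa using (hasDerivAt_id u).sub_const u
  have := HasDerivAt.comp u (by simpa using h) hs
  have heq : ((fun t => F (u + t)) ∘ fun s => s - u) = F := by
    funext s; simp [Function.comp]
  rw [heq] at this
  simpa using this

lemma hasDerivAt_update' {d : ℕ} (F G : (Fin d → ℝ) → ℝ) (j : Fin d)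
    (h : ∀ y, HasLineDerivAt ℝ F (G y) y (Pi.single j 1)) (z : Fin d → ℝ) (u : ℝ) :
    HasDerivAt (fun v => F (Function.update z j v)) (G (Function.update z j u)) u := by
  have h1 : HasDerivAt (fun t : ℝ => F (Function.update z j u + t • (Pi.single j 1 : Fin d → ℝ)))
      (G (Function.update z j u)) 0 := h (Function.update z j u)
  have heq : (fun t : ℝ => F (Function.update z j u + t • (Pi.single j 1 : Fin d → ℝ)))
      = fun t : ℝ => (fun v => F (Function.update z j v)) (u + t) := by
    funext t
    congr 1
    funext i
    by_cases hij : i = j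
    · subst hij; simp
    · simp [Function.update_of_ne hij, Pi.single_eq_of_ne hij]
  rw [heq] at h1
  exact hasDerivAt_of_shift h1

lemma univar (n : ℕ) (hn : 0 < n) (g g' g'' : ℝ → ℝ) (M : ℝ)
    (hg : ∀ u, HasDerivAt g (g' u) u) (hg' : ∀ u, HasDerivAt g' (g'' u) u)
    (hM : ∀ u ∈ Set.Icc (0:ℝ) 1, |g'' u| ≤ M)
    {t : ℝ} (ht : t ∈ Set.Icc (0:ℝ) 1) :
    |g t - ∑ a : Fin (n+1), g ((a : ℝ)/n) * Bw n (a : ℕ) t| ≤ M / (8 * n) := by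
  have hM0 : 0 ≤ M := le_trans (abs_nonneg _) (hM 0 (by norm_num))
  have hn' : (0:ℝ) < n := by exact_mod_cast hn
  have hmem : ∀ a : Fin (n+1), (a : ℝ)/n ∈ Set.Icc (0:ℝ) 1 := by
    intro a
    constructor
    · positivity
    · rw [div_le_one hn']
      exact_mod_cast Nat.lt_succ_iff.mp a.isLt
  -- rewrite difference as sum
  have key : g t - ∑ a : Fin (n+1), g ((a:ℝ)/n) * Bw n (a:ℕ) t
      = ∑ a : Fin (n+1), (g t + g' t * ((a:ℝ)/n - t) - g ((a:ℝ)/n)) * Bw n (a:ℕ) t := by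
    have e1 : ∑ a : Fin (n+1), (g t + g' t * ((a:ℝ)/n - t) - g ((a:ℝ)/n)) * Bw n (a:ℕ) t
        = g t * (∑ a : Fin (n+1), Bw n (a:ℕ) t)
          + g' t * ((∑ a : Fin (n+1), ((a:ℝ) * Bw n (a:ℕ) t))/n
             - t * (∑ a : Fin (n+1), Bw n (a:ℕ) t))
          - ∑ a : Fin (n+1), g ((a:ℝ)/n) * Bw n (a:ℕ) t := by
      rw [Finset.mul_sum, Finset.mul_sum, Finset.sum_div, ← Finset.sum_sub_distrib,
        Finset.mul_sum, ← Finset.sum_add_distrib, ← Finset.sum_sub_distrib]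
      refine Finset.sum_congr rfl fun a _ => ?_
      field_simp
    rw [e1, sum_Bw n ht, moment1_Bw n t]
    field_simp
    ring
  rw [key]
  calc |∑ a : Fin (n+1), (g t + g' t * ((a:ℝ)/n - t) - g ((a:ℝ)/n)) * Bw n (a:ℕ) t|
      ≤ ∑ a : Fin (n+1), |(g t + g' t * ((a:ℝ)/n - t) - g ((a:ℝ)/n)) * Bw n (a:ℕ) t| :=
        Finset.abs_sum_le_sum_abs _ _
    _ ≤ ∑ a : Fin (n+1), M / 2 * (((a:ℝ)/n - t)^2 * Bw n (a:ℕ) t) := by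
        refine Finset.sum_le_sum fun a _ => ?_
        rw [abs_mul, abs_of_nonneg (Bw_nonneg ht), ← mul_assoc]
        refine mul_le_mul_of_nonneg_right ?_ (Bw_nonneg ht)
        have h := taylor2 g g' g'' hg hg' M hM ht (hmem a)
        have he : |g t + g' t * ((a:ℝ)/n - t) - g ((a:ℝ)/n)|
            = |g ((a:ℝ)/n) - g t - g' t * ((a:ℝ)/n - t)| := by
          rw [abs_sub_comm]
          ring_nf
        rw [he]
        exact h
    _ = M / 2 * (t * (1 - t) / n) := by
        rw [← Finset.mul_sum, var_Bw hn ht]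
    _ ≤ M / 2 * ((1/4) / n) := by
        refine mul_le_mul_of_nonneg_left ?_ (by positivity)
        gcongr
        nlinarith [sq_nonneg (t - 1/2)]
    _ = M / (8 * n) := by
        rw [eq_div_iff (by positivity)]
        field_simp
        ring

noncomputable def hyb (d n m : ℕ) (x : Fin d → ℝ) (k : Fin d → Fin (n+1)) : Fin d → ℝ :=
  fun i => if (i : ℕ) < m then ((k i : ℕ) : ℝ) / n else x i

noncomputable def FF (d n : ℕ) (f : (Fin d → ℝ) → ℝ) (m : ℕ) (x : Fin d → ℝ) : ℝ :=
  ∑ k : Fin d → Fin (n+1), f (hyb d n m x k) * ∏ i, Bw n (k i : ℕ) (x i)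

lemma sum_prod_Bw {ι : Type*} [Fintype ι] [DecidableEq ι] (n : ℕ) (x : ι → ℝ)
    (hx : ∀ i, x i ∈ Set.Icc (0:ℝ) 1) :
    ∑ k : ι → Fin (n+1), ∏ i, Bw n (k i : ℕ) (x i) = 1 := by
  have h := Finset.prod_univ_sum (fun _ : ι => (Finset.univ : Finset (Fin (n+1))))
    (fun i a => Bw n (a : ℕ) (x i))
  rw [Fintype.piFinset_univ] at h
  rw [← h]
  rw [Finset.prod_eq_one]
  intro i _
  exact sum_Bw n (hx i)

lemma FF_zero {d n : ℕ} (f : (Fin d → ℝ) → ℝ) {x : Fin d → ℝ}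
    (hx : ∀ i, x i ∈ Set.Icc (0:ℝ) 1) : FF d n f 0 x = f x := by
  unfold FF
  have h1 : ∀ k : Fin d → Fin (n+1), hyb d n 0 x k = x := fun k => funext fun i => by simp [hyb]
  calc ∑ k : Fin d → Fin (n+1), f (hyb d n 0 x k) * ∏ i, Bw n (k i : ℕ) (x i)
      = ∑ k : Fin d → Fin (n+1), f x * ∏ i, Bw n (k i : ℕ) (x i) :=
        Finset.sum_congr rfl fun k _ => by rw [h1 k]
    _ = f x * ∑ k : Fin d → Fin (n+1), ∏ i, Bw n (k i : ℕ) (x i) := by rw [Finset.mul_sum]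
    _ = f x := by rw [sum_prod_Bw n x hx, mul_one]

/-- tensor product Bernstein approximation of a C² function on [0,1]^d:
error ≤ (d/(8n)) |f|_{2,∞}, where |f|_{2,∞} bounds all second order partial derivatives. -/
theorem tensor_bernstein_C2 (d n : ℕ) (hd : 1 ≤ d) (hn : 0 < n)
    (f : (Fin d → ℝ) → ℝ)
    (g1 : Fin d → (Fin d → ℝ) → ℝ)
    (g2 : Fin d → Fin d → (Fin d → ℝ) → ℝ)
    (hf1 : ∀ (i : Fin d) (x : Fin d → ℝ), HasLineDerivAt ℝ f (g1 i x) x (Pi.single i 1))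
    (hf2 : ∀ (i j : Fin d) (x : Fin d → ℝ),
      HasLineDerivAt ℝ (g1 i) (g2 i j x) x (Pi.single j 1))
    (hfc : ContinuousOn f (Set.Icc (0 : Fin d → ℝ) 1))
    (hg1c : ∀ i, ContinuousOn (g1 i) (Set.Icc (0 : Fin d → ℝ) 1))
    (hg2c : ∀ i j, ContinuousOn (g2 i j) (Set.Icc (0 : Fin d → ℝ) 1))
    (M : ℝ) (hM : ∀ (i j : Fin d), ∀ x ∈ Set.Icc (0 : Fin d → ℝ) 1, |g2 i j x| ≤ M) :
    ∀ x ∈ Set.Icc (0 : Fin d → ℝ) 1,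
      |f x - ∑ k : Fin d → Fin (n+1),
          f (fun i => ((k i : ℕ) : ℝ)/n) *
            ∏ i, ((n.choose (k i) : ℝ) * (x i) ^ (k i : ℕ) * (1 - x i) ^ (n - (k i : ℕ)))|
        ≤ (d:ℝ)/(8*(n:ℝ)) * M := by
  intro x hx
  have hxc : ∀ i, x i ∈ Set.Icc (0:ℝ) 1 := fun i => ⟨hx.1 i, hx.2 i⟩
  have hn' : (0:ℝ) < n := by exact_mod_cast hn
  -- the statement sum is FF d
  have hFFd : FF d n f d x = ∑ k : Fin d → Fin (n+1),
      f (fun i => ((k i : ℕ) : ℝ)/n) *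
        ∏ i, ((n.choose (k i) : ℝ) * (x i) ^ (k i : ℕ) * (1 - x i) ^ (n - (k i : ℕ))) := by
    unfold FF Bw
    refine Finset.sum_congr rfl fun k _ => ?_
    have h : hyb d n d x k = fun i => ((k i : ℕ) : ℝ)/n :=
      funext fun i => by simp [hyb, i.isLt]
    rw [h]
  -- the telescoping step bound
  have hstep : ∀ m, m < d → |FF d n f m x - FF d n f (m+1) x| ≤ M / (8 * n) := by
    intro m hm
    set j : Fin d := ⟨m, hm⟩ with hj
    have hjval : (j : ℕ) = m := rfl
    set z : ({i : Fin d // i ≠ j} → Fin (n+1)) → (Fin d → ℝ) :=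
      fun r => hyb d n m x ((Equiv.funSplitAt j (Fin (n+1))).symm (0, r)) with hz
    have hzj : ∀ r, z r j = x j := by
      intro r; simp [hz, hyb, hjval]
    have hzmem : ∀ r i, z r i ∈ Set.Icc (0:ℝ) 1 := by
      intro r i
      simp only [hz, hyb]
      by_cases hi : (i : ℕ) < m
      · rw [if_pos hi]
        constructor
        · positivity
        · rw [div_le_one hn']
          exact_mod_cast Nat.lt_succ_iff.mp (Fin.isLt _)
      · rw [if_neg hi]; exact hxc i
    have hzA : ∀ (a : Fin (n+1)) r, hyb d n m x ((Equiv.funSplitAt j (Fin (n+1))).symm (a, r)) = z r := by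
      intro a r
      funext i
      by_cases hi : (i : ℕ) < m
      · have hij : i ≠ j := by
          intro hh; rw [hh, hjval] at hi; exact lt_irrefl m hi
        simp [hyb, hi, hz, Equiv.funSplitAt_symm_apply, hij]
      · simp [hyb, hi, hz]
    have hzB : ∀ (a : Fin (n+1)) r, hyb d n (m+1) x ((Equiv.funSplitAt j (Fin (n+1))).symm (a, r))
        = Function.update (z r) j (((a:ℕ):ℝ)/n) := by
      intro a r
      funext i
      by_cases hij : i = j
      · rw [hij, Function.update_self]
        simp [hyb, Equiv.funSplitAt_symm_apply, hjval, Nat.lt_succ_self]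
      · rw [Function.update_of_ne hij]
        have hne : (i:ℕ) ≠ m := fun hh => hij (Fin.ext (hh.trans hjval.symm))
        by_cases hi : (i:ℕ) < m
        · have hi1 : (i:ℕ) < m+1 := Nat.lt_succ_of_lt hi
          simp [hyb, hi, hi1, hz, Equiv.funSplitAt_symm_apply, hij]
        · have hi1 : ¬ (i:ℕ) < m+1 := by omega
          simp [hyb, hi, hi1, hz]
    set P : ({i : Fin d // i ≠ j} → Fin (n+1)) → ℝ :=
      fun r => ∏ i : {i : Fin d // i ≠ j}, Bw n (r i : ℕ) (x i) with hP
    have hPnn : ∀ r, 0 ≤ P r :=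
      fun r => Finset.prod_nonneg fun i _ => Bw_nonneg (hxc i)
    have hPsum : ∑ r : ({i : Fin d // i ≠ j} → Fin (n+1)), P r = 1 :=
      sum_prod_Bw n (fun i : {i : Fin d // i ≠ j} => x i) (fun i => hxc i)
    have hzC : ∀ (a : Fin (n+1)) r,
        (∏ i, Bw n (((Equiv.funSplitAt j (Fin (n+1))).symm (a, r)) i : ℕ) (x i))
        = Bw n (a:ℕ) (x j) * P r := by
      intro a r
      rw [← Finset.mul_prod_erase Finset.univ _ (Finset.mem_univ j)]
      have h1 : ((Equiv.funSplitAt j (Fin (n+1))).symm (a, r)) j = a := by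
        simp [Equiv.funSplitAt_symm_apply]
      rw [h1]
      congr 1
      have h2 : ∏ i ∈ Finset.univ.erase j,
          Bw n (((Equiv.funSplitAt j (Fin (n+1))).symm (a, r)) i : ℕ) (x i)
          = ∏ i : {i : Fin d // i ≠ j},
              Bw n (((Equiv.funSplitAt j (Fin (n+1))).symm (a, r)) i.val : ℕ) (x i.val) :=
        Finset.prod_subtype _ (fun i => by simp) _
      rw [h2]
      exact Finset.prod_congr rfl fun i _ => by
        simp [Equiv.funSplitAt_symm_apply, i.2]
    -- inner sum bound per r
    have hinner : ∀ r : ({i : Fin d // i ≠ j} → Fin (n+1)),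
        |f (z r) - ∑ a : Fin (n+1),
            f (Function.update (z r) j (((a:ℕ):ℝ)/n)) * Bw n (a:ℕ) (x j)| ≤ M / (8 * n) := by
      intro r
      have hgd : ∀ u, HasDerivAt (fun v => f (Function.update (z r) j v))
          (g1 j (Function.update (z r) j u)) u :=
        fun u => hasDerivAt_update' f (g1 j) j (fun y => hf1 j y) (z r) u
      have hgd2 : ∀ u, HasDerivAt (fun v => g1 j (Function.update (z r) j v))
          (g2 j j (Function.update (z r) j u)) u :=
        fun u => hasDerivAt_update' (g1 j) (g2 j j) j (fun y => hf2 j j y) (z r) u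
      have hcube : ∀ u ∈ Set.Icc (0:ℝ) 1,
          Function.update (z r) j u ∈ Set.Icc (0 : Fin d → ℝ) 1 := by
        intro u hu
        constructor
        · intro i
          by_cases hij : i = j
          · subst hij; rw [Function.update_self]; exact hu.1
          · rw [Function.update_of_ne hij]; exact (hzmem r i).1
        · intro i
          by_cases hij : i = j
          · subst hij; rw [Function.update_self]; exact hu.2
          · rw [Function.update_of_ne hij]; exact (hzmem r i).2
      have hbd : ∀ u ∈ Set.Icc (0:ℝ) 1, |g2 j j (Function.update (z r) j u)| ≤ M :=
        fun u hu => hM j j _ (hcube u hu)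
      have hu := univar n hn (fun v => f (Function.update (z r) j v))
        (fun u => g1 j (Function.update (z r) j u))
        (fun u => g2 j j (Function.update (z r) j u)) M hgd hgd2 hbd (hxc j)
      have hfz : f (Function.update (z r) j (x j)) = f (z r) := by
        rw [← hzj r, Function.update_eq_self]
      simpa only [hfz] using hu
    -- put it together
    have hdiff : FF d n f m x - FF d n f (m+1) x
        = ∑ r : ({i : Fin d // i ≠ j} → Fin (n+1)),
            P r * (f (z r) - ∑ a : Fin (n+1),
              f (Function.update (z r) j (((a:ℕ):ℝ)/n)) * Bw n (a:ℕ) (x j)) := by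
      unfold FF
      rw [← Finset.sum_sub_distrib]
      have e1 : ∑ k : Fin d → Fin (n+1),
          (f (hyb d n m x k) * ∏ i, Bw n (k i : ℕ) (x i)
            - f (hyb d n (m+1) x k) * ∏ i, Bw n (k i : ℕ) (x i))
          = ∑ r : ({i : Fin d // i ≠ j} → Fin (n+1)), ∑ a : Fin (n+1),
              (f (hyb d n m x ((Equiv.funSplitAt j (Fin (n+1))).symm (a, r)))
                * ∏ i, Bw n (((Equiv.funSplitAt j (Fin (n+1))).symm (a, r)) i : ℕ) (x i)
               - f (hyb d n (m+1) x ((Equiv.funSplitAt j (Fin (n+1))).symm (a, r)))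
                * ∏ i, Bw n (((Equiv.funSplitAt j (Fin (n+1))).symm (a, r)) i : ℕ) (x i)) := by
        rw [← Equiv.sum_comp (Equiv.funSplitAt j (Fin (n+1))).symm
          (fun k => f (hyb d n m x k) * ∏ i, Bw n (k i : ℕ) (x i)
            - f (hyb d n (m+1) x k) * ∏ i, Bw n (k i : ℕ) (x i)),
          Fintype.sum_prod_type_right]
      rw [e1]
      refine Finset.sum_congr rfl fun r _ => ?_
      have e2 : ∀ a : Fin (n+1),
          (f (hyb d n m x ((Equiv.funSplitAt j (Fin (n+1))).symm (a, r)))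
            * ∏ i, Bw n (((Equiv.funSplitAt j (Fin (n+1))).symm (a, r)) i : ℕ) (x i)
           - f (hyb d n (m+1) x ((Equiv.funSplitAt j (Fin (n+1))).symm (a, r)))
            * ∏ i, Bw n (((Equiv.funSplitAt j (Fin (n+1))).symm (a, r)) i : ℕ) (x i))
          = (f (z r) - f (Function.update (z r) j (((a:ℕ):ℝ)/n)))
              * (Bw n (a:ℕ) (x j) * P r) := by
        intro a
        rw [hzA a r, hzB a r, hzC a r]
        ring
      rw [Finset.sum_congr rfl fun a _ => e2 a]
      have e3 : ∑ a : Fin (n+1),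
          (f (z r) - f (Function.update (z r) j (((a:ℕ):ℝ)/n)))
            * (Bw n (a:ℕ) (x j) * P r)
          = (f (z r) * (∑ a : Fin (n+1), Bw n (a:ℕ) (x j))
              - ∑ a : Fin (n+1),
                  f (Function.update (z r) j (((a:ℕ):ℝ)/n)) * Bw n (a:ℕ) (x j)) * P r := by
        simp only [sub_mul, Finset.sum_mul, Finset.mul_sum, ← Finset.sum_sub_distrib]
        exact Finset.sum_congr rfl fun a _ => by ring
      rw [e3, sum_Bw n (hxc j), mul_one]
      ring
    rw [hdiff]
    calc |∑ r : ({i : Fin d // i ≠ j} → Fin (n+1)), P r * (f (z r) - ∑ a : Fin (n+1),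
            f (Function.update (z r) j (((a:ℕ):ℝ)/n)) * Bw n (a:ℕ) (x j))|
        ≤ ∑ r : ({i : Fin d // i ≠ j} → Fin (n+1)), |P r * (f (z r) - ∑ a : Fin (n+1),
            f (Function.update (z r) j (((a:ℕ):ℝ)/n)) * Bw n (a:ℕ) (x j))| :=
          Finset.abs_sum_le_sum_abs _ _
      _ ≤ ∑ r : ({i : Fin d // i ≠ j} → Fin (n+1)), P r * (M / (8 * n)) := by
          refine Finset.sum_le_sum fun r _ => ?_
          rw [abs_mul, abs_of_nonneg (hPnn r)]
          exact mul_le_mul_of_nonneg_left (hinner r) (hPnn r)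
      _ = M / (8 * n) := by rw [← Finset.sum_mul, hPsum, one_mul]
  -- telescoping
  have htel : f x - FF d n f d x = ∑ m ∈ Finset.range d, (FF d n f m x - FF d n f (m+1) x) := by
    have key := Finset.sum_range_sub (fun m => FF d n f m x) d
    have h0 := FF_zero (n := n) f hxc
    rw [Finset.sum_sub_distrib] at key ⊢
    linarith [key]
  rw [← hFFd]
  calc |f x - FF d n f d x|
      = |∑ m ∈ Finset.range d, (FF d n f m x - FF d n f (m+1) x)| := by rw [htel]
    _ ≤ ∑ m ∈ Finset.range d, |FF d n f m x - FF d n f (m+1) x| :=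
        Finset.abs_sum_le_sum_abs _ _
    _ ≤ ∑ _m ∈ Finset.range d, M / (8 * n) :=
        Finset.sum_le_sum fun m hm => hstep m (Finset.mem_range.mp hm)
    _ = d * (M / (8 * n)) := by rw [Finset.sum_const, Finset.card_range, nsmul_eq_mul]
    _ = (d:ℝ)/(8*(n:ℝ)) * M := by ring
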